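/- Let A be a unital complex prime *-algebra with a nontrivial projection p₁, p₂ = 1 - p₁, Aᵢⱼ = pᵢApⱼ, B a unital complex *-algebra, α₁,...,α₆ ∈ ℂ with ∑αₖ ≠ 0. If Φ : A → B is a bijection preserving the sum of triple products α₁ab*c + α₂acb* + α₃b*ac + α₄cab* + α₅b*ca + α₆cb*a, then for i ≠ j and all a, b ∈ Aᵢⱼ, Φ(a + b) = Φ(a) + Φ(b). -/

import Mathlib

def starTripleSum {R : Type*} [NonUnitalRing R] [Module ℂ R] [StarRing R]
    (α1 α2 α3 α4 α5 α6 : ℂ) (a b c : R) : R :=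
  α1 • (a * star b * c) + α2 • (a * c * star b) + α3 • (star b * a * c) +
  α4 • (c * a * star b) + α5 • (star b * c * a) + α6 • (c * star b * a)

namespace Stmt5Aux

section Scalar
variable {M : Type*} [AddCommGroup M] [Module ℂ M]

lemma smul_cancel {c : ℂ} {X : M} (hc : c ≠ 0) (h : c • X = 0) : X = 0 := by
  have h2 := congrArg (fun z : M => c⁻¹ • z) h
  simpa [smul_smul, inv_mul_cancel₀ hc] using h2

lemma elim2 {a b c d : ℂ} {X Y : M} (h1 : a • X + b • Y = 0) (h2 : c • X + d • Y = 0) :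
    (a * d - b * c) • X = 0 ∧ (a * d - b * c) • Y = 0 := by
  constructor
  · have h3 : (a * d - b * c) • X = d • (a • X + b • Y) - b • (c • X + d • Y) := by module
    rw [h3, h1, h2, smul_zero, smul_zero, sub_zero]
  · have h3 : (a * d - b * c) • Y = a • (c • X + d • Y) - c • (a • X + b • Y) := by module
    rw [h3, h1, h2, smul_zero, smul_zero, sub_zero]

lemma scalar_pin (α1 α2 α3 α4 α5 α6 : ℂ)
    (hs : α1 + α2 + α3 + α4 + α5 + α6 ≠ 0) {X Y : M}
    (R1 : (α2+α4) • X + α6 • Y = 0)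
    (R2 : α1 • X + (α3+α5) • Y = 0)
    (R3 : (α2+α4) • X + α1 • Y = 0)
    (R4 : α6 • X + (α3+α5) • Y = 0)
    (R5 : (α1+α3) • X + α5 • Y = 0)
    (R6 : α2 • X + (α4+α6) • Y = 0)
    (R7 : (α5+α6) • X + α3 • Y = 0)
    (R8 : α4 • X + (α1+α2) • Y = 0) : X = 0 ∧ Y = 0 := by
  by_cases hd1 : (α2+α4)*(α3+α5) - α6*α1 = 0
  swap
  · obtain ⟨hX, hY⟩ := elim2 R1 R2; exact ⟨smul_cancel hd1 hX, smul_cancel hd1 hY⟩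
  by_cases hd2 : α1*α1 - (α3+α5)*(α2+α4) = 0
  swap
  · obtain ⟨hX, hY⟩ := elim2 R2 R3; exact ⟨smul_cancel hd2 hX, smul_cancel hd2 hY⟩
  by_cases hd3 : (α2+α4)*(α3+α5) - α6*α6 = 0
  swap
  · obtain ⟨hX, hY⟩ := elim2 R1 R4; exact ⟨smul_cancel hd3 hX, smul_cancel hd3 hY⟩
  by_cases hd4 : (α2+α4)*α5 - α6*(α1+α3) = 0
  swap
  · obtain ⟨hX, hY⟩ := elim2 R1 R5; exact ⟨smul_cancel hd4 hX, smul_cancel hd4 hY⟩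
  by_cases hd5 : (α2+α4)*α3 - α6*(α5+α6) = 0
  swap
  · obtain ⟨hX, hY⟩ := elim2 R1 R7; exact ⟨smul_cancel hd5 hX, smul_cancel hd5 hY⟩
  by_cases h1 : α1 = 0
  · have h6 : α6 = 0 := by
      have h62 : α6 * α6 = 0 := by linear_combination hd1 - hd3 + α6 * h1
      exact mul_self_eq_zero.mp h62
    by_cases hb : α2 + α4 = 0
    · have hγ : α3 + α5 ≠ 0 := by
        intro h; exact hs (by linear_combination h1 + hb + h + h6)
      have hY : Y = 0 := by
        apply smul_cancel hγ
        have h0 := R2; rw [h1, zero_smul, zero_add] at h0; exact h0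
      have hX3 : α3 • X = 0 := by
        have h0 := R5; rw [h1, hY, smul_zero, add_zero, zero_add] at h0; exact h0
      have hX5 : α5 • X = 0 := by
        have h0 := R7; rw [h6, hY, smul_zero, add_zero, add_zero] at h0; exact h0
      refine ⟨smul_cancel hγ ?_, hY⟩
      rw [add_smul, hX3, hX5, add_zero]
    · have hγ0 : α3 + α5 = 0 := by
        rcases mul_eq_zero.mp (show (α2+α4)*(α3+α5) = 0 by linear_combination hd1 + α6*h1) with h | h
        · exact absurd h hb
        · exact h
      have hX : X = 0 := by
        apply smul_cancel hb
        have h0 := R1; rw [h6, zero_smul, add_zero] at h0; exact h0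
      have hY4 : α4 • Y = 0 := by
        have h0 := R6; rw [hX, smul_zero, zero_add, h6, add_zero] at h0; exact h0
      have hY2 : α2 • Y = 0 := by
        have h0 := R8; rw [hX, smul_zero, zero_add, h1, zero_add] at h0; exact h0
      refine ⟨hX, smul_cancel hb ?_⟩
      rw [add_smul, hY2, hY4, add_zero]
  · exfalso
    have e16 : α6 = α1 := by
      have h0 : (α1 - α6) * α1 = 0 := by linear_combination hd2 + hd1
      rcases mul_eq_zero.mp h0 with h | h
      · linear_combination -h
      · exact absurd h h1
    have hγ : α3 + α5 = -α1 := by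
      have h0 : α1 * ((α3 + α5) + α1) = 0 := by
        linear_combination -hd4 - hd5 - hd2 - (α3+α5+α6+2*α1) * e16
      rcases mul_eq_zero.mp h0 with h | h
      · exact absurd h h1
      · linear_combination h
    have hβ : α2 + α4 = -α1 := by
      have h0 : α1 * ((α2 + α4) + α1) = 0 := by
        linear_combination hd2 + (α2+α4) * hγ
      rcases mul_eq_zero.mp h0 with h | h
      · exact absurd h h1
      · linear_combination h
    exact hs (by linear_combination hβ + hγ + e16)

lemma pick (a b c d : ℂ) (h1 : ¬(a = 0 ∧ b = 0)) (h2 : ¬(c = 0 ∧ d = 0)) :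
    ∃ ν ρ : ℂ, a*ν + b*ρ ≠ 0 ∧ c*ν + d*ρ ≠ 0 := by
  by_cases ha : a = 0
  · have hb : b ≠ 0 := fun h => h1 ⟨ha, h⟩
    by_cases hc : c = 0
    · have hd : d ≠ 0 := fun h => h2 ⟨hc, h⟩
      exact ⟨0, 1, by simpa [ha] using hb, by simpa [hc] using hd⟩
    · refine ⟨(1 - d) * c⁻¹, 1, by simpa [ha] using hb, ?_⟩
      have h3 : c * ((1 - d) * c⁻¹) + d * 1 = 1 := by field_simp; ring
      rw [h3]; exact one_ne_zero
  · by_cases hdd : d = 0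
    · have hc : c ≠ 0 := fun h => h2 ⟨h, hdd⟩
      exact ⟨1, 0, by simpa using ha, by simpa [hdd] using hc⟩
    · by_cases hg : c * (-b * a⁻¹ + 1) + d ≠ 0
      · refine ⟨-b * a⁻¹ + 1, 1, ?_, by simpa using hg⟩
        have h3 : a * (-b * a⁻¹ + 1) + b * 1 = a := by field_simp; ring
        rw [h3]; exact ha
      · push_neg at hg
        have hc0 : c ≠ 0 := by
          intro h; rw [h] at hg; simp at hg; exact hdd hg
        refine ⟨-b * a⁻¹ + 2, 1, ?_, ?_⟩
        · have h3 : a * (-b * a⁻¹ + 2) + b * 1 = 2 * a := by field_simp; ring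
          rw [h3]; exact mul_ne_zero two_ne_zero ha
        · have h3 : c * (-b * a⁻¹ + 2) + d * 1 = (c * (-b * a⁻¹ + 1) + d) + c := by ring
          rw [h3, hg, zero_add]; exact hc0

end Scalar

section STS
variable {R : Type*} [NonUnitalRing R] [Module ℂ R] [StarRing R] (α1 α2 α3 α4 α5 α6 : ℂ)

lemma sts_add1 (x x' y z : R) :
    starTripleSum α1 α2 α3 α4 α5 α6 (x + x') y z =
      starTripleSum α1 α2 α3 α4 α5 α6 x y z + starTripleSum α1 α2 α3 α4 α5 α6 x' y z := by
  simp only [starTripleSum, add_mul, mul_add, smul_add]; abel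

lemma sts_add2 (x y y' z : R) :
    starTripleSum α1 α2 α3 α4 α5 α6 x (y + y') z =
      starTripleSum α1 α2 α3 α4 α5 α6 x y z + starTripleSum α1 α2 α3 α4 α5 α6 x y' z := by
  simp only [starTripleSum, star_add, add_mul, mul_add, smul_add]; abel

lemma sts_add3 (x y z z' : R) :
    starTripleSum α1 α2 α3 α4 α5 α6 x y (z + z') =
      starTripleSum α1 α2 α3 α4 α5 α6 x y z + starTripleSum α1 α2 α3 α4 α5 α6 x y z' := by
  simp only [starTripleSum, add_mul, mul_add, smul_add]; abel

lemma sts_sub1 (x x' y z : R) :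
    starTripleSum α1 α2 α3 α4 α5 α6 (x - x') y z =
      starTripleSum α1 α2 α3 α4 α5 α6 x y z - starTripleSum α1 α2 α3 α4 α5 α6 x' y z := by
  simp only [starTripleSum, sub_mul, mul_sub, smul_sub]; abel

lemma sts_sub2 (x y y' z : R) :
    starTripleSum α1 α2 α3 α4 α5 α6 x (y - y') z =
      starTripleSum α1 α2 α3 α4 α5 α6 x y z - starTripleSum α1 α2 α3 α4 α5 α6 x y' z := by
  simp only [starTripleSum, star_sub, sub_mul, mul_sub, smul_sub]; abel

lemma sts_sub3 (x y z z' : R) :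
    starTripleSum α1 α2 α3 α4 α5 α6 x y (z - z') =
      starTripleSum α1 α2 α3 α4 α5 α6 x y z - starTripleSum α1 α2 α3 α4 α5 α6 x y z' := by
  simp only [starTripleSum, sub_mul, mul_sub, smul_sub]; abel

end STS



lemma Madd {A B : Type*} [Ring A] [Algebra ℂ A] [StarRing A]
    [Ring B] [Algebra ℂ B] [StarRing B]
    (α1 α2 α3 α4 α5 α6 : ℂ)
    (hsum : α1 + α2 + α3 + α4 + α5 + α6 ≠ 0)
    (hprime : ∀ x y : A, (∀ t : A, x * t * y = 0) → x = 0 ∨ y = 0)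
    (q r : A) (hq2 : q * q = q) (hr2 : r * r = r) (hqr0 : q * r = 0) (hrq0 : r * q = 0)
    (hsq : star q = q) (hsr : star r = r) (hone : q + r = 1) (hq0 : q ≠ 0) (hr0 : r ≠ 0)
    (Φ : A → B) (hinj : Function.Injective Φ) (hsurj : Function.Surjective Φ)
    (hΦ : ∀ a b c : A, Φ (starTripleSum α1 α2 α3 α4 α5 α6 a b c) =
      starTripleSum α1 α2 α3 α4 α5 α6 (Φ a) (Φ b) (Φ c))
    (hΦ0 : Φ 0 = 0)
    (d : A)
    (hd1 : starTripleSum α1 α2 α3 α4 α5 α6 d q r = 0)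
    (hd2 : starTripleSum α1 α2 α3 α4 α5 α6 d r q = 0)
    (hd3 : starTripleSum α1 α2 α3 α4 α5 α6 q r d = 0)
    (hd4 : starTripleSum α1 α2 α3 α4 α5 α6 r q d = 0)
    (hd5 : starTripleSum α1 α2 α3 α4 α5 α6 q d r = 0)
    (hd6 : starTripleSum α1 α2 α3 α4 α5 α6 r d q = 0)
    (u : A) (hu : ∃ x : A, u = q * x * r) :
    Φ (d + u) = Φ d + Φ u := by
  obtain ⟨xu, rfl⟩ := hu
  obtain ⟨t, ht⟩ := hsurj (Φ d + Φ (q * xu * r))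
  have pqq : ∀ z : A, q * (q * z) = q * z := fun z => by rw [← mul_assoc, hq2]
  have pqr : ∀ z : A, q * (r * z) = 0 := fun z => by rw [← mul_assoc, hqr0, zero_mul]
  have prq : ∀ z : A, r * (q * z) = 0 := fun z => by rw [← mul_assoc, hrq0, zero_mul]
  have prr : ∀ z : A, r * (r * z) = r * z := fun z => by rw [← mul_assoc, hr2]
  set D := t - (d + q * xu * r) with hD
  -- collapse lemmas
  have col1 : ∀ y z : A, starTripleSum α1 α2 α3 α4 α5 α6 (q*xu*r) y z = 0 →
      starTripleSum α1 α2 α3 α4 α5 α6 D y z = 0 := by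
    intro y z h0
    have hty : starTripleSum α1 α2 α3 α4 α5 α6 t y z =
        starTripleSum α1 α2 α3 α4 α5 α6 d y z := by
      apply hinj
      rw [hΦ, ht, sts_add1, ← hΦ, ← hΦ, h0, hΦ0, add_zero]
    rw [hD, sts_sub1, sts_add1, hty, h0, add_zero, sub_self]
  have col1d : ∀ y z : A, starTripleSum α1 α2 α3 α4 α5 α6 d y z = 0 →
      starTripleSum α1 α2 α3 α4 α5 α6 D y z = 0 := by
    intro y z h0
    have hty : starTripleSum α1 α2 α3 α4 α5 α6 t y z =
        starTripleSum α1 α2 α3 α4 α5 α6 (q*xu*r) y z := by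
      apply hinj
      rw [hΦ, ht, sts_add1, ← hΦ, ← hΦ, h0, hΦ0, zero_add]
    rw [hD, sts_sub1, sts_add1, hty, h0, zero_add, sub_self]
  have col3 : ∀ x y : A, starTripleSum α1 α2 α3 α4 α5 α6 x y (q*xu*r) = 0 →
      starTripleSum α1 α2 α3 α4 α5 α6 x y D = 0 := by
    intro x y h0
    have hty : starTripleSum α1 α2 α3 α4 α5 α6 x y t =
        starTripleSum α1 α2 α3 α4 α5 α6 x y d := by
      apply hinj
      rw [hΦ, ht, sts_add3, ← hΦ, ← hΦ, h0, hΦ0, add_zero]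
    rw [hD, sts_sub3, sts_add3, hty, h0, add_zero, sub_self]
  have col3d : ∀ x y : A, starTripleSum α1 α2 α3 α4 α5 α6 x y d = 0 →
      starTripleSum α1 α2 α3 α4 α5 α6 x y D = 0 := by
    intro x y h0
    have hty : starTripleSum α1 α2 α3 α4 α5 α6 x y t =
        starTripleSum α1 α2 α3 α4 α5 α6 x y (q*xu*r) := by
      apply hinj
      rw [hΦ, ht, sts_add3, ← hΦ, ← hΦ, h0, hΦ0, zero_add]
    rw [hD, sts_sub3, sts_add3, hty, h0, zero_add, sub_self]
  have col2d : ∀ x z : A, starTripleSum α1 α2 α3 α4 α5 α6 x d z = 0 →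
      starTripleSum α1 α2 α3 α4 α5 α6 x D z = 0 := by
    intro x z h0
    have hty : starTripleSum α1 α2 α3 α4 α5 α6 x t z =
        starTripleSum α1 α2 α3 α4 α5 α6 x (q*xu*r) z := by
      apply hinj
      rw [hΦ, ht, sts_add2, ← hΦ, ← hΦ, h0, hΦ0, zero_add]
    rw [hD, sts_sub2, sts_add2, hty, h0, zero_add, sub_self]
  have hG1 : starTripleSum α1 α2 α3 α4 α5 α6 D q r = 0 := col1d q r hd1
  have hG2 : starTripleSum α1 α2 α3 α4 α5 α6 D r q = 0 := col1d r q hd2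
  have hG3 : starTripleSum α1 α2 α3 α4 α5 α6 q r D = 0 := col3d q r hd3
  have hG4 : starTripleSum α1 α2 α3 α4 α5 α6 r q D = 0 := col3d r q hd4
  have hG5 : starTripleSum α1 α2 α3 α4 α5 α6 q D r = 0 := col2d q r hd5
  have hG6 : starTripleSum α1 α2 α3 α4 α5 α6 r D q = 0 := col2d r q hd6
  -- corner extraction identities
  have X1 : ∀ D' : A, q * (starTripleSum α1 α2 α3 α4 α5 α6 D' q r) * r = α3 • (q * D' * r) := by
    intro D'
    simp [starTripleSum, mul_assoc, mul_add, add_mul, mul_smul_comm, smul_mul_assoc,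
      pqq, pqr, prq, prr, hq2, hr2, hqr0, hrq0, hsq, hsr] <;> module
  have X1' : ∀ D' : A, r * (starTripleSum α1 α2 α3 α4 α5 α6 D' q r) * q = α4 • (r * D' * q) := by
    intro D'
    simp [starTripleSum, mul_assoc, mul_add, add_mul, mul_smul_comm, smul_mul_assoc,
      pqq, pqr, prq, prr, hq2, hr2, hqr0, hrq0, hsq, hsr] <;> module
  have X2 : ∀ D' : A, q * (starTripleSum α1 α2 α3 α4 α5 α6 D' r q) * r = α4 • (q * D' * r) := by
    intro D'
    simp [starTripleSum, mul_assoc, mul_add, add_mul, mul_smul_comm, smul_mul_assoc,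
      pqq, pqr, prq, prr, hq2, hr2, hqr0, hrq0, hsq, hsr] <;> module
  have X2' : ∀ D' : A, r * (starTripleSum α1 α2 α3 α4 α5 α6 D' r q) * q = α3 • (r * D' * q) := by
    intro D'
    simp [starTripleSum, mul_assoc, mul_add, add_mul, mul_smul_comm, smul_mul_assoc,
      pqq, pqr, prq, prr, hq2, hr2, hqr0, hrq0, hsq, hsr] <;> module
  have X3 : ∀ D' : A, q * (starTripleSum α1 α2 α3 α4 α5 α6 q r D') * r = α2 • (q * D' * r) := by
    intro D'
    simp [starTripleSum, mul_assoc, mul_add, add_mul, mul_smul_comm, smul_mul_assoc,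
      pqq, pqr, prq, prr, hq2, hr2, hqr0, hrq0, hsq, hsr] <;> module
  have X3' : ∀ D' : A, r * (starTripleSum α1 α2 α3 α4 α5 α6 q r D') * q = α5 • (r * D' * q) := by
    intro D'
    simp [starTripleSum, mul_assoc, mul_add, add_mul, mul_smul_comm, smul_mul_assoc,
      pqq, pqr, prq, prr, hq2, hr2, hqr0, hrq0, hsq, hsr] <;> module
  have X4 : ∀ D' : A, q * (starTripleSum α1 α2 α3 α4 α5 α6 r q D') * r = α5 • (q * D' * r) := by
    intro D'
    simp [starTripleSum, mul_assoc, mul_add, add_mul, mul_smul_comm, smul_mul_assoc,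
      pqq, pqr, prq, prr, hq2, hr2, hqr0, hrq0, hsq, hsr] <;> module
  have X4' : ∀ D' : A, r * (starTripleSum α1 α2 α3 α4 α5 α6 r q D') * q = α2 • (r * D' * q) := by
    intro D'
    simp [starTripleSum, mul_assoc, mul_add, add_mul, mul_smul_comm, smul_mul_assoc,
      pqq, pqr, prq, prr, hq2, hr2, hqr0, hrq0, hsq, hsr] <;> module
  have X5 : ∀ D' : A, q * (starTripleSum α1 α2 α3 α4 α5 α6 q D' r) * r = α1 • (q * star D' * r) := by
    intro D'
    simp [starTripleSum, mul_assoc, mul_add, add_mul, mul_smul_comm, smul_mul_assoc,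
      pqq, pqr, prq, prr, hq2, hr2, hqr0, hrq0, hsq, hsr] <;> module
  have X5' : ∀ D' : A, r * (starTripleSum α1 α2 α3 α4 α5 α6 q D' r) * q = α6 • (r * star D' * q) := by
    intro D'
    simp [starTripleSum, mul_assoc, mul_add, add_mul, mul_smul_comm, smul_mul_assoc,
      pqq, pqr, prq, prr, hq2, hr2, hqr0, hrq0, hsq, hsr] <;> module
  have X6 : ∀ D' : A, q * (starTripleSum α1 α2 α3 α4 α5 α6 r D' q) * r = α6 • (q * star D' * r) := by
    intro D'
    simp [starTripleSum, mul_assoc, mul_add, add_mul, mul_smul_comm, smul_mul_assoc,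
      pqq, pqr, prq, prr, hq2, hr2, hqr0, hrq0, hsq, hsr] <;> module
  have X6' : ∀ D' : A, r * (starTripleSum α1 α2 α3 α4 α5 α6 r D' q) * q = α1 • (r * star D' * q) := by
    intro D'
    simp [starTripleSum, mul_assoc, mul_add, add_mul, mul_smul_comm, smul_mul_assoc,
      pqq, pqr, prq, prr, hq2, hr2, hqr0, hrq0, hsq, hsr] <;> module
  have hsome : α1 ≠ 0 ∨ α2 ≠ 0 ∨ α3 ≠ 0 ∨ α4 ≠ 0 ∨ α5 ≠ 0 ∨ α6 ≠ 0 := by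
    by_contra hall
    push_neg at hall
    obtain ⟨e1, e2, e3, e4, e5, e6⟩ := hall
    exact hsum (by rw [e1, e2, e3, e4, e5, e6]; ring)
  have star_corner : ∀ Z : A, r * star Z * q = 0 → q * Z * r = 0 := by
    intro Z h
    have h2 := congrArg star h
    rw [star_zero, star_mul, star_mul, star_star, hsq, hsr] at h2
    rwa [← mul_assoc] at h2
  have star_corner' : ∀ Z : A, q * star Z * r = 0 → r * Z * q = 0 := by
    intro Z h
    have h2 := congrArg star h
    rw [star_zero, star_mul, star_mul, star_star, hsq, hsr] at h2
    rwa [← mul_assoc] at h2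
  have hD12 : q * D * r = 0 := by
    rcases hsome with h | h | h | h | h | h
    · apply star_corner; apply smul_cancel h; rw [← X6' D, hG6]; simp
    · apply smul_cancel h; rw [← X3 D, hG3]; simp
    · apply smul_cancel h; rw [← X1 D, hG1]; simp
    · apply smul_cancel h; rw [← X2 D, hG2]; simp
    · apply smul_cancel h; rw [← X4 D, hG4]; simp
    · apply star_corner; apply smul_cancel h; rw [← X5' D, hG5]; simp
  have hD21 : r * D * q = 0 := by
    rcases hsome with h | h | h | h | h | h
    · apply star_corner'; apply smul_cancel h; rw [← X5 D, hG5]; simp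
    · apply smul_cancel h; rw [← X4' D, hG4]; simp
    · apply smul_cancel h; rw [← X2' D, hG2]; simp
    · apply smul_cancel h; rw [← X1' D, hG1]; simp
    · apply smul_cancel h; rw [← X3' D, hG3]; simp
    · apply star_corner'; apply smul_cancel h; rw [← X6 D, hG6]; simp
  -- killing identities for corner elements
  have K1 : ∀ y : A, starTripleSum α1 α2 α3 α4 α5 α6 (q*xu*r) (star (q*y*r)) q = 0 := by
    intro y
    simp [starTripleSum, mul_assoc, pqq, pqr, prq, prr, hq2, hr2, hqr0, hrq0, hsq, hsr]
  have K2 : ∀ y : A, starTripleSum α1 α2 α3 α4 α5 α6 (q*xu*r) (star (q*y*r)) r = 0 := by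
    intro y
    simp [starTripleSum, mul_assoc, pqq, pqr, prq, prr, hq2, hr2, hqr0, hrq0, hsq, hsr]
  have K3 : ∀ y : A, starTripleSum α1 α2 α3 α4 α5 α6 q (star (q*y*r)) (q*xu*r) = 0 := by
    intro y
    simp [starTripleSum, mul_assoc, pqq, pqr, prq, prr, hq2, hr2, hqr0, hrq0, hsq, hsr]
  have K4 : ∀ y : A, starTripleSum α1 α2 α3 α4 α5 α6 r (star (q*y*r)) (q*xu*r) = 0 := by
    intro y
    simp [starTripleSum, mul_assoc, pqq, pqr, prq, prr, hq2, hr2, hqr0, hrq0, hsq, hsr]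
  have K5 : ∀ y : A, starTripleSum α1 α2 α3 α4 α5 α6 (q*xu*r) q (q*y*r) = 0 := by
    intro y
    simp [starTripleSum, mul_assoc, pqq, pqr, prq, prr, hq2, hr2, hqr0, hrq0, hsq, hsr]
  have K6 : ∀ y : A, starTripleSum α1 α2 α3 α4 α5 α6 (q*xu*r) r (q*y*r) = 0 := by
    intro y
    simp [starTripleSum, mul_assoc, pqq, pqr, prq, prr, hq2, hr2, hqr0, hrq0, hsq, hsr]
  have K7 : ∀ y : A, starTripleSum α1 α2 α3 α4 α5 α6 (q*y*r) q (q*xu*r) = 0 := by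
    intro y
    simp [starTripleSum, mul_assoc, pqq, pqr, prq, prr, hq2, hr2, hqr0, hrq0, hsq, hsr]
  have K8 : ∀ y : A, starTripleSum α1 α2 α3 α4 α5 α6 (q*y*r) r (q*xu*r) = 0 := by
    intro y
    simp [starTripleSum, mul_assoc, pqq, pqr, prq, prr, hq2, hr2, hqr0, hrq0, hsq, hsr]
  -- row extraction identities
  have E1 : ∀ D' y : A, q * (starTripleSum α1 α2 α3 α4 α5 α6 D' (star (q*y*r)) q) * r =
      (α2+α4) • ((q*D'*q) * (q*y*r)) + α6 • ((q*y*r) * (r*D'*r)) := by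
    intro D' y
    simp [starTripleSum, mul_assoc, mul_add, add_mul, add_smul, mul_smul_comm, smul_mul_assoc,
      pqq, pqr, prq, prr, hq2, hr2, hqr0, hrq0, hsq, hsr] <;> module
  have E2 : ∀ D' y : A, q * (starTripleSum α1 α2 α3 α4 α5 α6 D' (star (q*y*r)) r) * r =
      α1 • ((q*D'*q) * (q*y*r)) + (α3+α5) • ((q*y*r) * (r*D'*r)) := by
    intro D' y
    simp [starTripleSum, mul_assoc, mul_add, add_mul, add_smul, mul_smul_comm, smul_mul_assoc,
      pqq, pqr, prq, prr, hq2, hr2, hqr0, hrq0, hsq, hsr] <;> module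
  have E3 : ∀ D' y : A, q * (starTripleSum α1 α2 α3 α4 α5 α6 q (star (q*y*r)) D') * r =
      (α2+α4) • ((q*D'*q) * (q*y*r)) + α1 • ((q*y*r) * (r*D'*r)) := by
    intro D' y
    simp [starTripleSum, mul_assoc, mul_add, add_mul, add_smul, mul_smul_comm, smul_mul_assoc,
      pqq, pqr, prq, prr, hq2, hr2, hqr0, hrq0, hsq, hsr] <;> module
  have E4 : ∀ D' y : A, q * (starTripleSum α1 α2 α3 α4 α5 α6 r (star (q*y*r)) D') * r =
      α6 • ((q*D'*q) * (q*y*r)) + (α3+α5) • ((q*y*r) * (r*D'*r)) := by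
    intro D' y
    simp [starTripleSum, mul_assoc, mul_add, add_mul, add_smul, mul_smul_comm, smul_mul_assoc,
      pqq, pqr, prq, prr, hq2, hr2, hqr0, hrq0, hsq, hsr] <;> module
  have E5 : ∀ D' y : A, q * (starTripleSum α1 α2 α3 α4 α5 α6 D' q (q*y*r)) * r =
      (α1+α3) • ((q*D'*q) * (q*y*r)) + α5 • ((q*y*r) * (r*D'*r)) := by
    intro D' y
    simp [starTripleSum, mul_assoc, mul_add, add_mul, add_smul, mul_smul_comm, smul_mul_assoc,
      pqq, pqr, prq, prr, hq2, hr2, hqr0, hrq0, hsq, hsr] <;> module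
  have E6 : ∀ D' y : A, q * (starTripleSum α1 α2 α3 α4 α5 α6 D' r (q*y*r)) * r =
      α2 • ((q*D'*q) * (q*y*r)) + (α4+α6) • ((q*y*r) * (r*D'*r)) := by
    intro D' y
    simp [starTripleSum, mul_assoc, mul_add, add_mul, add_smul, mul_smul_comm, smul_mul_assoc,
      pqq, pqr, prq, prr, hq2, hr2, hqr0, hrq0, hsq, hsr] <;> module
  have E7 : ∀ D' y : A, q * (starTripleSum α1 α2 α3 α4 α5 α6 (q*y*r) q D') * r =
      (α5+α6) • ((q*D'*q) * (q*y*r)) + α3 • ((q*y*r) * (r*D'*r)) := by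
    intro D' y
    simp [starTripleSum, mul_assoc, mul_add, add_mul, add_smul, mul_smul_comm, smul_mul_assoc,
      pqq, pqr, prq, prr, hq2, hr2, hqr0, hrq0, hsq, hsr] <;> module
  have E8 : ∀ D' y : A, q * (starTripleSum α1 α2 α3 α4 α5 α6 (q*y*r) r D') * r =
      α4 • ((q*D'*q) * (q*y*r)) + (α1+α2) • ((q*y*r) * (r*D'*r)) := by
    intro D' y
    simp [starTripleSum, mul_assoc, mul_add, add_mul, add_smul, mul_smul_comm, smul_mul_assoc,
      pqq, pqr, prq, prr, hq2, hr2, hqr0, hrq0, hsq, hsr] <;> module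
  have hXY : ∀ y : A, (q*D*q) * (q*y*r) = 0 ∧ (q*y*r) * (r*D*r) = 0 := by
    intro y
    have hF1 := col1 (star (q*y*r)) q (K1 y)
    have hF2 := col1 (star (q*y*r)) r (K2 y)
    have hF3 := col3 q (star (q*y*r)) (K3 y)
    have hF4 := col3 r (star (q*y*r)) (K4 y)
    have hF5 := col1 q (q*y*r) (K5 y)
    have hF6 := col1 r (q*y*r) (K6 y)
    have hF7 := col3 (q*y*r) q (K7 y)
    have hF8 := col3 (q*y*r) r (K8 y)
    have r1 : (α2+α4) • ((q*D*q) * (q*y*r)) + α6 • ((q*y*r) * (r*D*r)) = 0 := by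
      rw [← E1 D y, hF1]; simp
    have r2 : α1 • ((q*D*q) * (q*y*r)) + (α3+α5) • ((q*y*r) * (r*D*r)) = 0 := by
      rw [← E2 D y, hF2]; simp
    have r3 : (α2+α4) • ((q*D*q) * (q*y*r)) + α1 • ((q*y*r) * (r*D*r)) = 0 := by
      rw [← E3 D y, hF3]; simp
    have r4 : α6 • ((q*D*q) * (q*y*r)) + (α3+α5) • ((q*y*r) * (r*D*r)) = 0 := by
      rw [← E4 D y, hF4]; simp
    have r5 : (α1+α3) • ((q*D*q) * (q*y*r)) + α5 • ((q*y*r) * (r*D*r)) = 0 := by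
      rw [← E5 D y, hF5]; simp
    have r6 : α2 • ((q*D*q) * (q*y*r)) + (α4+α6) • ((q*y*r) * (r*D*r)) = 0 := by
      rw [← E6 D y, hF6]; simp
    have r7 : (α5+α6) • ((q*D*q) * (q*y*r)) + α3 • ((q*y*r) * (r*D*r)) = 0 := by
      rw [← E7 D y, hF7]; simp
    have r8 : α4 • ((q*D*q) * (q*y*r)) + (α1+α2) • ((q*y*r) * (r*D*r)) = 0 := by
      rw [← E8 D y, hF8]; simp
    exact scalar_pin α1 α2 α3 α4 α5 α6 hsum r1 r2 r3 r4 r5 r6 r7 r8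
  have hD11 : q * D * q = 0 := by
    have hall : ∀ z : A, (q*D*q) * z * r = 0 := by
      intro z
      have h0 := (hXY z).1
      have h1 : (q*D*q) * z * r = (q*D*q) * (q*z*r) := by
        simp [mul_assoc, pqq]
      rw [h1, h0]
    rcases hprime _ _ hall with h | h
    · exact h
    · exact absurd h hr0
  have hD22 : r * D * r = 0 := by
    have hall : ∀ z : A, q * z * (r*D*r) = 0 := by
      intro z
      have h0 := (hXY z).2
      have h1 : q * z * (r*D*r) = (q*z*r) * (r*D*r) := by
        simp [mul_assoc, prr]
      rw [h1, h0]
    rcases hprime _ _ hall with h | h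
    · exact absurd h hq0
    · exact h
  have hDzero : D = 0 := by
    have h10 : D = q*D*q + q*D*r + (r*D*q + r*D*r) := by
      have h11 : (q+r) * D * (q+r) = q*D*q + q*D*r + (r*D*q + r*D*r) := by
        noncomm_ring
      rw [← h11, hone, one_mul, mul_one]
    rw [h10, hD11, hD12, hD21, hD22]; simp
  have hteq : t = d + q * xu * r := by
    rw [hD] at hDzero
    exact sub_eq_zero.mp hDzero
  rw [← hteq, ht]



lemma core {A B : Type*} [Ring A] [Algebra ℂ A] [StarRing A]
    [Ring B] [Algebra ℂ B] [StarRing B]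
    (α1 α2 α3 α4 α5 α6 : ℂ)
    (hsum : α1 + α2 + α3 + α4 + α5 + α6 ≠ 0)
    (hprime : ∀ x y : A, (∀ t : A, x * t * y = 0) → x = 0 ∨ y = 0)
    (q r : A) (hq2 : q * q = q) (hr2 : r * r = r) (hqr0 : q * r = 0) (hrq0 : r * q = 0)
    (hsq : star q = q) (hsr : star r = r) (hone : q + r = 1) (hq0 : q ≠ 0) (hr0 : r ≠ 0)
    (Φ : A → B) (hinj : Function.Injective Φ) (hsurj : Function.Surjective Φ)
    (hΦ : ∀ a b c : A, Φ (starTripleSum α1 α2 α3 α4 α5 α6 a b c) =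
      starTripleSum α1 α2 α3 α4 α5 α6 (Φ a) (Φ b) (Φ c))
    (a b : A) (ha : ∃ x : A, a = q * x * r) (hb : ∃ x : A, b = q * x * r) :
    Φ (a + b) = Φ a + Φ b := by
  obtain ⟨xa, rfl⟩ := ha
  obtain ⟨xb, rfl⟩ := hb
  have pqq : ∀ z : A, q * (q * z) = q * z := fun z => by rw [← mul_assoc, hq2]
  have pqr : ∀ z : A, q * (r * z) = 0 := fun z => by rw [← mul_assoc, hqr0, zero_mul]
  have prq : ∀ z : A, r * (q * z) = 0 := fun z => by rw [← mul_assoc, hrq0, zero_mul]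
  have prr : ∀ z : A, r * (r * z) = r * z := fun z => by rw [← mul_assoc, hr2]
  -- Φ 0 = 0
  obtain ⟨c0, hc0⟩ := hsurj 0
  have hΦ0 : Φ 0 = 0 := by
    have h1 : starTripleSum α1 α2 α3 α4 α5 α6 (0:A) 0 c0 = 0 := by
      simp [starTripleSum]
    have h2 := hΦ 0 0 c0
    rw [h1, hc0] at h2
    simpa [starTripleSum] using h2
  -- killing identities for scalar multiples of q and r
  have hdq : ∀ l : ℂ,
      starTripleSum α1 α2 α3 α4 α5 α6 (l•q) q r = 0 ∧
      starTripleSum α1 α2 α3 α4 α5 α6 (l•q) r q = 0 ∧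
      starTripleSum α1 α2 α3 α4 α5 α6 q r (l•q) = 0 ∧
      starTripleSum α1 α2 α3 α4 α5 α6 r q (l•q) = 0 ∧
      starTripleSum α1 α2 α3 α4 α5 α6 q (l•q) r = 0 ∧
      starTripleSum α1 α2 α3 α4 α5 α6 r (l•q) q = 0 := by
    intro l
    have hcomm : ∀ z : A, star (algebraMap ℂ A l) * z = z * star (algebraMap ℂ A l) := by
      intro z
      calc star (algebraMap ℂ A l) * z = star (star z * algebraMap ℂ A l) := by
            rw [star_mul, star_star]
        _ = star (algebraMap ℂ A l * star z) := by rw [Algebra.commutes]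
        _ = z * star (algebraMap ℂ A l) := by rw [star_mul, star_star]
    have hstarlq : star (l•q) = q * star (algebraMap ℂ A l) := by
      rw [Algebra.smul_def, star_mul, hsq]
    have hcq := hcomm q
    have hcr := hcomm r
    refine ⟨?_, ?_, ?_, ?_, ?_, ?_⟩ <;>
      simp [starTripleSum, hstarlq, hsq, hsr, mul_assoc, smul_mul_assoc, mul_smul_comm,
        pqq, pqr, prq, prr, hq2, hr2, hqr0, hrq0, hcq, hcr]
  have hdr : ∀ l : ℂ,
      starTripleSum α1 α2 α3 α4 α5 α6 (l•r) q r = 0 ∧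
      starTripleSum α1 α2 α3 α4 α5 α6 (l•r) r q = 0 ∧
      starTripleSum α1 α2 α3 α4 α5 α6 q r (l•r) = 0 ∧
      starTripleSum α1 α2 α3 α4 α5 α6 r q (l•r) = 0 ∧
      starTripleSum α1 α2 α3 α4 α5 α6 q (l•r) r = 0 ∧
      starTripleSum α1 α2 α3 α4 α5 α6 r (l•r) q = 0 := by
    intro l
    have hcomm : ∀ z : A, star (algebraMap ℂ A l) * z = z * star (algebraMap ℂ A l) := by
      intro z
      calc star (algebraMap ℂ A l) * z = star (star z * algebraMap ℂ A l) := by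
            rw [star_mul, star_star]
        _ = star (algebraMap ℂ A l * star z) := by rw [Algebra.commutes]
        _ = z * star (algebraMap ℂ A l) := by rw [star_mul, star_star]
    have hstarlr : star (l•r) = r * star (algebraMap ℂ A l) := by
      rw [Algebra.smul_def, star_mul, hsr]
    have hcq := hcomm q
    have hcr := hcomm r
    refine ⟨?_, ?_, ?_, ?_, ?_, ?_⟩ <;>
      simp [starTripleSum, hstarlr, hsq, hsr, mul_assoc, smul_mul_assoc, mul_smul_comm,
        pqq, pqr, prq, prr, hq2, hr2, hqr0, hrq0, hcq, hcr]
  -- mixed additivity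
  have MQ : ∀ (l : ℂ) (x : A), Φ (l•q + q*x*r) = Φ (l•q) + Φ (q*x*r) := by
    intro l x
    obtain ⟨k1, k2, k3, k4, k5, k6⟩ := hdq l
    exact Madd α1 α2 α3 α4 α5 α6 hsum hprime q r hq2 hr2 hqr0 hrq0 hsq hsr hone hq0 hr0
      Φ hinj hsurj hΦ hΦ0 (l•q) k1 k2 k3 k4 k5 k6 (q*x*r) ⟨x, rfl⟩
  have MR : ∀ (l : ℂ) (x : A), Φ (l•r + q*x*r) = Φ (l•r) + Φ (q*x*r) := by
    intro l x
    obtain ⟨k1, k2, k3, k4, k5, k6⟩ := hdr l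
    exact Madd α1 α2 α3 α4 α5 α6 hsum hprime q r hq2 hr2 hqr0 hrq0 hsq hsr hone hq0 hr0
      Φ hinj hsurj hΦ hΦ0 (l•r) k1 k2 k3 k4 k5 k6 (q*x*r) ⟨x, rfl⟩
  -- value identities
  have V3 : ∀ (ν ρ : ℂ) (x x' : A),
      starTripleSum α1 α2 α3 α4 α5 α6 (q*x*r) (star (ν•q + ρ•r)) (q*x'*r) = 0 := by
    intro ν ρ x x'
    simp [starTripleSum, star_star, mul_assoc, mul_add, add_mul, smul_mul_assoc, mul_smul_comm,
      pqq, pqr, prq, prr, hq2, hr2, hqr0, hrq0]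
  have VA0 : ∀ (l m ν ρ : ℂ),
      starTripleSum α1 α2 α3 α4 α5 α6 (l•q) (star (ν•q + ρ•r)) (m•r) = 0 := by
    intro l m ν ρ
    simp [starTripleSum, star_star, mul_assoc, mul_add, add_mul, smul_mul_assoc, mul_smul_comm,
      pqq, pqr, prq, prr, hq2, hr2, hqr0, hrq0]
  have VA1 : ∀ (l ν ρ : ℂ) (x : A),
      starTripleSum α1 α2 α3 α4 α5 α6 (l•q) (star (ν•q + ρ•r)) (q*x*r) =
        (l * ((α1+α3)*ν + α2*ρ)) • (q*x*r) := by
    intro l ν ρ x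
    simp [starTripleSum, star_star, mul_assoc, mul_add, add_mul, smul_mul_assoc, mul_smul_comm,
      smul_smul, pqq, pqr, prq, prr, hq2, hr2, hqr0, hrq0] <;> module
  have VA2 : ∀ (m ν ρ : ℂ) (x : A),
      starTripleSum α1 α2 α3 α4 α5 α6 (q*x*r) (star (ν•q + ρ•r)) (m•r) =
        (m * (α3*ν + (α1+α2)*ρ)) • (q*x*r) := by
    intro m ν ρ x
    simp [starTripleSum, star_star, mul_assoc, mul_add, add_mul, smul_mul_assoc, mul_smul_comm,
      smul_smul, pqq, pqr, prq, prr, hq2, hr2, hqr0, hrq0] <;> module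
  have VB0 : ∀ (l m ν ρ : ℂ),
      starTripleSum α1 α2 α3 α4 α5 α6 (m•r) (star (ν•q + ρ•r)) (l•q) = 0 := by
    intro l m ν ρ
    simp [starTripleSum, star_star, mul_assoc, mul_add, add_mul, smul_mul_assoc, mul_smul_comm,
      pqq, pqr, prq, prr, hq2, hr2, hqr0, hrq0]
  have VB1 : ∀ (m ν ρ : ℂ) (x : A),
      starTripleSum α1 α2 α3 α4 α5 α6 (m•r) (star (ν•q + ρ•r)) (q*x*r) =
        (m * (α5*ν + (α4+α6)*ρ)) • (q*x*r) := by
    intro m ν ρ x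
    simp [starTripleSum, star_star, mul_assoc, mul_add, add_mul, smul_mul_assoc, mul_smul_comm,
      smul_smul, pqq, pqr, prq, prr, hq2, hr2, hqr0, hrq0] <;> module
  have VB2 : ∀ (l ν ρ : ℂ) (x : A),
      starTripleSum α1 α2 α3 α4 α5 α6 (q*x*r) (star (ν•q + ρ•r)) (l•q) =
        (l * ((α5+α6)*ν + α4*ρ)) • (q*x*r) := by
    intro l ν ρ x
    simp [starTripleSum, star_star, mul_assoc, mul_add, add_mul, smul_mul_assoc, mul_smul_comm,
      smul_smul, pqq, pqr, prq, prr, hq2, hr2, hqr0, hrq0] <;> module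
  -- choose the working configuration
  by_cases hA1 : (α1 + α3 = 0 ∧ α2 = 0) ∨ (α3 = 0 ∧ α1 + α2 = 0)
  · -- case B
    have hp : α1 + α2 + α3 = 0 := by
      rcases hA1 with ⟨h1, h2⟩ | ⟨h1, h2⟩ <;> linear_combination h1 + h2
    have hB1 : ¬(α5 = 0 ∧ α4 + α6 = 0) := by
      rintro ⟨h1, h2⟩; exact hsum (by linear_combination hp + h1 + h2)
    have hB2 : ¬(α5 + α6 = 0 ∧ α4 = 0) := by
      rintro ⟨h1, h2⟩; exact hsum (by linear_combination hp + h1 + h2)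
    obtain ⟨ν, ρ, hf, hg⟩ := pick α5 (α4+α6) (α5+α6) α4 hB1 hB2
    set m := (α5*ν + (α4+α6)*ρ)⁻¹ with hm
    set l := ((α5+α6)*ν + α4*ρ)⁻¹ with hl
    set y := star (ν•q + ρ•r) with hy
    have hmf : m * (α5*ν + (α4+α6)*ρ) = 1 := inv_mul_cancel₀ hf
    have hlg : l * ((α5+α6)*ν + α4*ρ) = 1 := inv_mul_cancel₀ hg
    have hLHS : starTripleSum α1 α2 α3 α4 α5 α6 (m•r + q*xa*r) y (l•q + q*xb*r) =
        q*xb*r + q*xa*r := by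
      rw [sts_add1, sts_add3, sts_add3, VB0, VB1, VB2, V3, hmf, hlg, one_smul, one_smul,
        zero_add, add_zero]
    have h2 : Φ (q*xb*r + q*xa*r) = Φ (q*xb*r) + Φ (q*xa*r) := by
      rw [← hLHS, hΦ, MR m xa, MQ l xb, sts_add1, sts_add3, sts_add3,
        ← hΦ, ← hΦ, ← hΦ, ← hΦ, VB0, VB1, VB2, V3, hmf, hlg, one_smul, one_smul, hΦ0,
        zero_add, add_zero]
    rw [add_comm (q*xa*r) (q*xb*r), h2, add_comm]
  · -- case A
    have hA1' := not_or.mp hA1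
    obtain ⟨ν, ρ, hf, hg⟩ := pick (α1+α3) α2 α3 (α1+α2) hA1'.1 hA1'.2
    set l := ((α1+α3)*ν + α2*ρ)⁻¹ with hl
    set m := (α3*ν + (α1+α2)*ρ)⁻¹ with hm
    set y := star (ν•q + ρ•r) with hy
    have hlf : l * ((α1+α3)*ν + α2*ρ) = 1 := inv_mul_cancel₀ hf
    have hmg : m * (α3*ν + (α1+α2)*ρ) = 1 := inv_mul_cancel₀ hg
    have hLHS : starTripleSum α1 α2 α3 α4 α5 α6 (l•q + q*xa*r) y (m•r + q*xb*r) =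
        q*xb*r + q*xa*r := by
      rw [sts_add1, sts_add3, sts_add3, VA0, VA1, VA2, V3, hlf, hmg, one_smul, one_smul,
        zero_add, add_zero]
    have h2 : Φ (q*xb*r + q*xa*r) = Φ (q*xb*r) + Φ (q*xa*r) := by
      rw [← hLHS, hΦ, MQ l xa, MR m xb, sts_add1, sts_add3, sts_add3,
        ← hΦ, ← hΦ, ← hΦ, ← hΦ, VA0, VA1, VA2, V3, hlf, hmg, one_smul, one_smul, hΦ0,
        zero_add, add_zero]
    rw [add_comm (q*xa*r) (q*xb*r), h2, add_comm]

end Stmt5Aux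

theorem stmt5 {A B : Type*} [Ring A] [Algebra ℂ A] [StarRing A]
    [Ring B] [Algebra ℂ B] [StarRing B]
    (α1 α2 α3 α4 α5 α6 : ℂ)
    (hsum : α1 + α2 + α3 + α4 + α5 + α6 ≠ 0)
    (hprime : ∀ x y : A, (∀ t : A, x * t * y = 0) → x = 0 ∨ y = 0)
    (e : A) (hestar : star e = e) (heidem : e * e = e) (he0 : e ≠ 0) (he1 : e ≠ 1)
    (Φ : A → B) (hbij : Function.Bijective Φ)
    (hΦ : ∀ a b c : A, Φ (starTripleSum α1 α2 α3 α4 α5 α6 a b c) =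
      starTripleSum α1 α2 α3 α4 α5 α6 (Φ a) (Φ b) (Φ c))
    (q r : A) (hqr : (q = e ∧ r = 1 - e) ∨ (q = 1 - e ∧ r = e))
    (a b : A) (ha : ∃ x : A, a = q * x * r) (hb : ∃ x : A, b = q * x * r) :
    Φ (a + b) = Φ a + Φ b := by
  obtain ⟨hinj, hsurj⟩ := hbij
  have F2 : (1-e) * (1-e) = 1-e := by
    have h1 : (1 - e) * (1 - e) = 1 - e - e + e * e := by noncomm_ring
    rw [h1, heidem]; abel
  have F3 : e * (1-e) = 0 := by
    have h1 : e * (1 - e) = e - e * e := by noncomm_ring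
    rw [h1, heidem, sub_self]
  have F4 : (1-e) * e = 0 := by
    have h1 : (1 - e) * e = e - e * e := by noncomm_ring
    rw [h1, heidem, sub_self]
  have F6 : star (1-e) = 1-e := by rw [star_sub, star_one, hestar]
  have F7 : e + (1-e) = 1 := by abel
  have F7' : (1-e) + e = 1 := by abel
  have F9 : (1:A) - e ≠ 0 := by
    intro h0
    exact he1 (sub_eq_zero.mp h0).symm
  rcases hqr with ⟨hq, hr⟩ | ⟨hq, hr⟩ <;> rw [hq, hr] at ha hb
  · exact Stmt5Aux.core α1 α2 α3 α4 α5 α6 hsum hprime e (1-e) heidem F2 F3 F4 hestar F6 F7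
      he0 F9 Φ hinj hsurj hΦ a b ha hb
  · exact Stmt5Aux.core α1 α2 α3 α4 α5 α6 hsum hprime (1-e) e F2 heidem F4 F3 F6 hestar F7'
      F9 he0 Φ hinj hsurj hΦ a b ha hb
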